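/- There exist constants C > 0 and c > 0 such that for all t ≥ 1 and all x, u ∈ ℝ, |∂K_t(x,u)/∂t| ≤ C e^{x²/2} exp(−c (e^{−t}u − x)²) (e^{−t}|u| + e^{−2t}). -/

import Mathlib

open Real MeasureTheory Set

/-- The Mehler kernel of the one-dimensional Ornstein--Uhlenbeck semigroup. -/
noncomputable def mehlerK (t x u : ℝ) : ℝ :=
  Real.exp (x ^ 2 / 2) / Real.sqrt (1 - Real.exp (-2 * t)) *
    Real.exp (-(Real.exp (-t) * u - x) ^ 2 / (2 * (1 - Real.exp (-2 * t))))

lemma gauss_sq (y : ℝ) : y^2 * Real.exp (-y^2/2) ≤ 4 * Real.exp (-y^2/4) := by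
  have h1 : y^2 ≤ 4 * Real.exp (y^2/4) := by
    nlinarith [Real.add_one_le_exp (y^2/4)]
  have h4 : Real.exp (y^2/4) * Real.exp (-y^2/2) = Real.exp (-y^2/4) := by
    rw [← Real.exp_add]; ring_nf
  calc y^2 * Real.exp (-y^2/2) ≤ 4 * Real.exp (y^2/4) * Real.exp (-y^2/2) :=
        mul_le_mul_of_nonneg_right h1 (Real.exp_pos _).le
    _ = 4 * (Real.exp (y^2/4) * Real.exp (-y^2/2)) := by ring
    _ = 4 * Real.exp (-y^2/4) := by rw [h4]

lemma gauss_abs (y : ℝ) : |y| * Real.exp (-y^2/2) ≤ 5 * Real.exp (-y^2/4) := by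
  have h0 : |y| ≤ 1 + y^2 := by nlinarith [sq_abs y, abs_nonneg y]
  have h1 : Real.exp (-y^2/2) ≤ Real.exp (-y^2/4) := Real.exp_le_exp.mpr (by nlinarith [sq_nonneg y])
  have h2 := gauss_sq y
  calc |y| * Real.exp (-y^2/2) ≤ (1 + y^2) * Real.exp (-y^2/2) :=
        mul_le_mul_of_nonneg_right h0 (Real.exp_pos _).le
    _ = Real.exp (-y^2/2) + y^2 * Real.exp (-y^2/2) := by ring
    _ ≤ Real.exp (-y^2/4) + 4 * Real.exp (-y^2/4) := by linarith
    _ = 5 * Real.exp (-y^2/4) := by ring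

lemma mehler_bound_aux (E S e2 a u D v : ℝ)
    (hEpos : 0 < E) (hapos : 0 < a) (he2pos : 0 < e2) (he2le : e2 ≤ 1/2)
    (hv : v = 1 - e2) (hSq : S^2 = v) (hSnn : 0 ≤ S) :
    |E / S * Real.exp (-D^2/(2*v)) *
      (-e2/v + a*u*D/v + D^2*e2/v^2)| ≤
    100 * E * Real.exp (-(1/4) * D^2) * (a * |u| + e2) := by
  have hvhalf : 1/2 ≤ v := by rw [hv]; linarith
  have hvpos : 0 < v := by linarith
  have hS : 1/2 ≤ S := by nlinarith
  have hSpos : 0 < S := by linarith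
  have hKnn : 0 ≤ E / S * Real.exp (-D^2/(2*v)) := by positivity
  have hexple : Real.exp (-D^2/(2*v)) ≤ Real.exp (-D^2/2) := by
    apply Real.exp_le_exp.mpr
    rw [neg_div, neg_div, neg_le_neg_iff]
    exact div_le_div_of_nonneg_left (sq_nonneg D) (by linarith) (by linarith)
  have hKle : E / S * Real.exp (-D^2/(2*v)) ≤ 2 * E * Real.exp (-D^2/2) := by
    have h1 : E / S ≤ 2 * E := by
      rw [div_le_iff₀ hSpos]; nlinarith
    exact mul_le_mul h1 hexple (Real.exp_pos _).le (by positivity)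
  have hBle : |(-e2/v + a*u*D/v + D^2*e2/v^2)| ≤
      2*e2 + 2*(a * |u| * |D|) + 4*(D^2*e2) := by
    have hb1 : |(-e2) / v| ≤ 2 * e2 := by
      rw [abs_div, abs_neg, abs_of_pos he2pos, abs_of_pos hvpos, div_le_iff₀ hvpos]
      nlinarith
    have hb2 : |a * u * D / v| ≤ 2 * (a * |u| * |D|) := by
      rw [abs_div, abs_of_pos hvpos, div_le_iff₀ hvpos, abs_mul, abs_mul, abs_of_pos hapos]
      nlinarith [mul_nonneg (mul_nonneg hapos.le (abs_nonneg u)) (abs_nonneg D)]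
    have hb3 : |D^2 * e2 / v^2| ≤ 4 * (D^2 * e2) := by
      rw [abs_div, abs_of_nonneg (by positivity : (0:ℝ) ≤ D^2 * e2),
        abs_of_pos (by positivity : (0:ℝ) < v^2), div_le_iff₀ (by positivity : (0:ℝ) < v^2)]
      have h4v : (1:ℝ) ≤ 4 * v^2 := by nlinarith
      nlinarith [mul_le_mul_of_nonneg_left h4v (mul_nonneg (sq_nonneg D) he2pos.le)]
    calc |(-e2/v + a*u*D/v + D^2*e2/v^2)|
        ≤ |(-e2/v + a*u*D/v)| + |D^2*e2/v^2| := abs_add_le _ _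
      _ ≤ |(-e2)/v| + |a*u*D/v| + |D^2*e2/v^2| := by
          linarith [abs_add_le (-e2/v) (a*u*D/v)]
      _ ≤ 2*e2 + 2*(a * |u| * |D|) + 4*(D^2*e2) := by linarith
  have hmain : |E / S * Real.exp (-D^2/(2*v)) * (-e2/v + a*u*D/v + D^2*e2/v^2)| ≤
      (2 * E * Real.exp (-D^2/2)) * (2*e2 + 2*(a * |u| * |D|) + 4*(D^2*e2)) := by
    rw [abs_mul, abs_of_nonneg hKnn]
    exact mul_le_mul hKle hBle (abs_nonneg _) (by positivity)
  have hg1 : Real.exp (-D^2/2) ≤ Real.exp (-D^2/4) :=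
    Real.exp_le_exp.mpr (by nlinarith [sq_nonneg D])
  have hg2 := gauss_abs D
  have hg3 := gauss_sq D
  have hrw : Real.exp (-(1/4) * D^2) = Real.exp (-D^2/4) := by ring_nf
  rw [hrw]
  have h1 : (4*E*e2) * Real.exp (-D^2/2) ≤ (4*E*e2) * Real.exp (-D^2/4) :=
    mul_le_mul_of_nonneg_left hg1 (by positivity)
  have h2 : (4*E*(a * |u|)) * (|D| * Real.exp (-D^2/2)) ≤ (4*E*(a * |u|)) * (5 * Real.exp (-D^2/4)) :=
    mul_le_mul_of_nonneg_left hg2 (by positivity)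
  have h3 : (8*E*e2) * (D^2 * Real.exp (-D^2/2)) ≤ (8*E*e2) * (4 * Real.exp (-D^2/4)) :=
    mul_le_mul_of_nonneg_left hg3 (by positivity)
  have hp1 : 0 ≤ E * Real.exp (-D^2/4) * (a * |u|) := by positivity
  have hp2 : 0 ≤ E * Real.exp (-D^2/4) * e2 := by positivity
  calc |E / S * Real.exp (-D^2/(2*v)) * (-e2/v + a*u*D/v + D^2*e2/v^2)|
      ≤ (2 * E * Real.exp (-D^2/2)) * (2*e2 + 2*(a * |u| * |D|) + 4*(D^2*e2)) := hmain
    _ ≤ 100 * E * Real.exp (-D^2/4) * (a * |u| + e2) := by nlinarith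

lemma mehler_key (E G S v e a D : ℝ) (h : S^2 = v) (hS : 0 < S) :
    E/S*G * (-e/v + a*D/v + D^2*e/v^2)
    = (0*S - E*(2*e/(2*S)))/S^2 * G
      + E/S * (G * ((-(2*D*(-(a))) * (2*v) - -(D^2)*(2*(2*e)))/(2*v)^2)) := by
  subst h
  have : S ≠ 0 := ne_of_gt hS
  field_simp
  ring

lemma mehler_hasDerivAt (x u t : ℝ) (ht : 0 < t) :
    HasDerivAt (fun s => mehlerK s x u)
      (mehlerK t x u *
        (-(Real.exp (-2*t)) / (1 - Real.exp (-2*t))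
          + Real.exp (-t) * u * (Real.exp (-t) * u - x) / (1 - Real.exp (-2*t))
          + (Real.exp (-t) * u - x)^2 * Real.exp (-2*t) / (1 - Real.exp (-2*t))^2)) t := by
  have hlt : Real.exp (-2*t) < 1 := by
    rw [Real.exp_lt_one_iff]; linarith
  have hvpos : 0 < 1 - Real.exp (-2*t) := by linarith
  have hspos : 0 < Real.sqrt (1 - Real.exp (-2*t)) := Real.sqrt_pos.mpr hvpos
  have hsq : Real.sqrt (1 - Real.exp (-2*t)) ^ 2 = 1 - Real.exp (-2*t) :=
    Real.sq_sqrt hvpos.le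
  have hv : HasDerivAt (fun s : ℝ => 1 - Real.exp (-2*s)) (2 * Real.exp (-2*t)) t := by
    have h1 : HasDerivAt (fun s : ℝ => -2*s) (-2) t := by
      simpa using (hasDerivAt_id t).const_mul (-2)
    have h2 := h1.exp.const_sub 1
    exact h2.congr_deriv (by ring)
  have hsqrt : HasDerivAt (fun s : ℝ => Real.sqrt (1 - Real.exp (-2*s)))
      (2 * Real.exp (-2*t) / (2 * Real.sqrt (1 - Real.exp (-2*t)))) t :=
    hv.sqrt (ne_of_gt hvpos)
  have hD : HasDerivAt (fun s : ℝ => Real.exp (-s) * u - x) (-(Real.exp (-t) * u)) t := by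
    have h1 : HasDerivAt (fun s : ℝ => -s) (-1) t := by
      exact (hasDerivAt_id t).neg
    have h2 := (h1.exp.mul_const u).sub_const x
    exact h2.congr_deriv (by ring)
  have hnum : HasDerivAt (fun s : ℝ => -(Real.exp (-s) * u - x)^2)
      (-(2 * (Real.exp (-t) * u - x) * (-(Real.exp (-t) * u)))) t := by
    have h2 := (hD.pow 2).neg
    exact h2.congr_deriv (by ring)
  have hden : HasDerivAt (fun s : ℝ => 2 * (1 - Real.exp (-2*s))) (2 * (2 * Real.exp (-2*t))) t :=
    hv.const_mul 2
  have hq := hnum.div hden (by positivity)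
  have hexp := hq.exp
  have hf := (hasDerivAt_const t (Real.exp (x^2/2))).div hsqrt (ne_of_gt hspos)
  have hmain := hf.mul hexp
  have heq : ∀ s : ℝ, mehlerK s x u =
      (Real.exp (x^2/2) / Real.sqrt (1 - Real.exp (-2*s))) *
        Real.exp (-(Real.exp (-s) * u - x)^2 / (2 * (1 - Real.exp (-2*s)))) := by
    intro s; rfl
  rw [show (fun s => mehlerK s x u) = fun s =>
      (Real.exp (x^2/2) / Real.sqrt (1 - Real.exp (-2*s))) *
        Real.exp (-(Real.exp (-s) * u - x)^2 / (2 * (1 - Real.exp (-2*s)))) from funext heq]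
  refine hmain.congr_deriv ?_
  rw [heq t]
  exact (mehler_key (Real.exp (x^2/2))
    (Real.exp (-(Real.exp (-t) * u - x)^2 / (2 * (1 - Real.exp (-2*t)))))
    (Real.sqrt (1 - Real.exp (-2*t))) (1 - Real.exp (-2*t)) (Real.exp (-2*t))
    (Real.exp (-t) * u) (Real.exp (-t) * u - x) hsq hspos).symm

theorem mehler_time_deriv_bound_large_t :
    ∃ C > (0:ℝ), ∃ c > (0:ℝ), ∀ t ≥ (1:ℝ), ∀ x u : ℝ,
      |deriv (fun s => mehlerK s x u) t| ≤
        C * Real.exp (x ^ 2 / 2) * Real.exp (-c * (Real.exp (-t) * u - x) ^ 2) *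
          (Real.exp (-t) * |u| + Real.exp (-2 * t)) := by
  refine ⟨100, by norm_num, 1/4, by norm_num, fun t ht x u => ?_⟩
  rw [(mehler_hasDerivAt x u t (by linarith)).deriv]
  have hlt : Real.exp (-2*t) < 1 := by rw [Real.exp_lt_one_iff]; linarith
  have he2le : Real.exp (-2*t) ≤ 1/2 := by
    have h1 : Real.exp (-2*t) ≤ Real.exp (-2) := Real.exp_le_exp.mpr (by linarith)
    have h2 : Real.exp (-2) * Real.exp 2 = 1 := by rw [← Real.exp_add]; norm_num
    have h3 : (2:ℝ) ≤ Real.exp 2 := by nlinarith [Real.add_one_le_exp (2:ℝ)]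
    nlinarith [Real.exp_pos (-2:ℝ)]
  exact mehler_bound_aux (Real.exp (x^2/2)) (Real.sqrt (1 - Real.exp (-2*t)))
    (Real.exp (-2*t)) (Real.exp (-t)) u (Real.exp (-t)*u - x) (1 - Real.exp (-2*t))
    (Real.exp_pos _) (Real.exp_pos _) (Real.exp_pos _) he2le rfl
    (Real.sq_sqrt (by linarith)) (Real.sqrt_nonneg _)
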